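/- Let G be a finite simple graph equipped with a type-2A crossing structure, let S be a set of vertices of G, let F be a connected component of G − S, and let ab be an edge of G with both endpoints a, b in V(F). If the edge ab crosses an edge xy of G, then both x and y lie in S ∪ V(F); in other words, either x, y ∈ S, or x, y ∈ V(F), or one of x, y lies in S and the other lies in V(F). -/
import Mathlib


/-- The associated edges of a crossing pair `ab`, `cd`: those of the vertex pairs
`ac`, `ad`, `bc`, `bd` that are edges of `G`. -/
def AssocEdges {V : Type*} (G : SimpleGraph V) (a b c d : V) : Set (Sym2 V) :=
  {e | e ∈ ({s(a, c), s(a, d), s(b, c), s(b, d)} : Set (Sym2 V)) ∧ e ∈ G.edgeSet}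

/-- A crossing structure on a simple graph `G`: a symmetric irreflexive relation on
unordered pairs of vertices that relates only edges of `G`, and whenever it relates
two edges, these edges have four pairwise distinct endpoints. -/
structure IsCrossingStructure {V : Type*} (G : SimpleGraph V)
    (Cross : Sym2 V → Sym2 V → Prop) : Prop where
  symm : ∀ e f, Cross e f → Cross f e
  irrefl : ∀ e, ¬ Cross e e
  edge_mem : ∀ e f, Cross e f → e ∈ G.edgeSet ∧ f ∈ G.edgeSet
  distinct : ∀ a b c d, Cross s(a, b) s(c, d) →
    a ≠ b ∧ a ≠ c ∧ a ≠ d ∧ b ≠ c ∧ b ≠ d ∧ c ≠ d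

/-- A crossing structure is type-2A if every crossing pair has at least two associated
edges, and whenever a crossing pair has exactly two associated edges, these two edges
share no endpoint (i.e. they are the pair `ac, bd` or the pair `ad, bc`). -/
def IsType2A {V : Type*} (G : SimpleGraph V) (Cross : Sym2 V → Sym2 V → Prop) : Prop :=
  ∀ a b c d, Cross s(a, b) s(c, d) →
    2 ≤ (AssocEdges G a b c d).ncard ∧
      ((AssocEdges G a b c d).ncard = 2 →
        (G.Adj a c ∧ G.Adj b d) ∨ (G.Adj a d ∧ G.Adj b c))

/-- A crossing structure is 1-planar if every edge crosses at most one other edge. -/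
def IsOnePlanar {V : Type*} (Cross : Sym2 V → Sym2 V → Prop) : Prop :=
  ∀ e f g, Cross e f → Cross e g → f = g

/-- A crossing structure is nice if no associated edge of a crossing pair crosses any edge. -/
def IsNice {V : Type*} (G : SimpleGraph V) (Cross : Sym2 V → Sym2 V → Prop) : Prop :=
  ∀ a b c d, Cross s(a, b) s(c, d) →
    ∀ e ∈ AssocEdges G a b c d, ∀ f, ¬ Cross e f

/-- An edge is crossed if it crosses some edge. -/
def IsCrossed {V : Type*} (Cross : Sym2 V → Sym2 V → Prop) (e : Sym2 V) : Prop :=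
  ∃ f, Cross e f

/-- for a vertex set `S` and a component `F` of `G − S`, if an edge `ab`
of `G` inside `F` crosses an edge `xy` of `G`, then both `x` and `y` lie in
`S ∪ V(F)`. -/
theorem statement3 {V : Type*} [Fintype V] (G : SimpleGraph V)
    (Cross : Sym2 V → Sym2 V → Prop)
    (hC : IsCrossingStructure G Cross) (h2A : IsType2A G Cross)
    (S : Set V)
    (F : (G.induce (Sᶜ : Set V)).ConnectedComponent)
    (a b : (Sᶜ : Set V)) (ha : a ∈ F.supp) (hb : b ∈ F.supp)
    (hab : G.Adj (a : V) (b : V))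
    (x y : V) (hxy : G.Adj x y)
    (hcross : Cross s((a : V), (b : V)) s(x, y)) :
    x ∈ S ∪ (Subtype.val '' F.supp) ∧ y ∈ S ∪ (Subtype.val '' F.supp) := by
  obtain ⟨h2, hex⟩ := h2A (a : V) (b : V) x y hcross
  -- key claim: x is adjacent to a or b, and y is adjacent to a or b
  have hkey : (G.Adj (a : V) x ∨ G.Adj (b : V) x) ∧
      (G.Adj (a : V) y ∨ G.Adj (b : V) y) := by
    by_cases hcard : (AssocEdges G (a : V) (b : V) x y).ncard = 2
    · rcases hex hcard with ⟨h1, h2'⟩ | ⟨h1, h2'⟩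
      · exact ⟨Or.inl h1, Or.inr h2'⟩
      · exact ⟨Or.inr h2', Or.inl h1⟩
    · have h3 : 3 ≤ (AssocEdges G (a : V) (b : V) x y).ncard := by omega
      constructor
      · by_contra hnx
        push_neg at hnx
        have hsub : AssocEdges G (a : V) (b : V) x y ⊆
            {s((a : V), y), s((b : V), y)} := by
          rintro e ⟨he, heG⟩
          rcases he with rfl | rfl | rfl | rfl
          · exact absurd ((SimpleGraph.mem_edgeSet G).mp heG) hnx.1
          · exact Set.mem_insert _ _
          · exact absurd ((SimpleGraph.mem_edgeSet G).mp heG) hnx.2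
          · exact Set.mem_insert_of_mem _ rfl
        have := Set.ncard_le_ncard hsub (Set.toFinite _)
        have h2' : ({s((a : V), y), s((b : V), y)} : Set (Sym2 V)).ncard ≤ 2 :=
          le_trans (Set.ncard_insert_le _ _) (by simp)
        omega
      · by_contra hny
        push_neg at hny
        have hsub : AssocEdges G (a : V) (b : V) x y ⊆
            {s((a : V), x), s((b : V), x)} := by
          rintro e ⟨he, heG⟩
          rcases he with rfl | rfl | rfl | rfl
          · exact Set.mem_insert _ _
          · exact absurd ((SimpleGraph.mem_edgeSet G).mp heG) hny.1
          · exact Set.mem_insert_of_mem _ rfl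
          · exact absurd ((SimpleGraph.mem_edgeSet G).mp heG) hny.2
        have := Set.ncard_le_ncard hsub (Set.toFinite _)
        have h2' : ({s((a : V), x), s((b : V), x)} : Set (Sym2 V)).ncard ≤ 2 :=
          le_trans (Set.ncard_insert_le _ _) (by simp)
        omega
  -- from adjacency to a or b, a vertex not in S is in F.supp
  have main : ∀ z : V, (G.Adj (a : V) z ∨ G.Adj (b : V) z) →
      z ∈ S ∪ (Subtype.val '' F.supp) := by
    intro z hz
    by_cases hzS : z ∈ S
    · exact Or.inl hzS
    · right
      have hzc : z ∈ (Sᶜ : Set V) := hzS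
      refine ⟨⟨z, hzc⟩, ?_, rfl⟩
      rcases hz with h | h
      · have hadj : (G.induce (Sᶜ : Set V)).Adj a ⟨z, hzc⟩ := h
        rw [SimpleGraph.ConnectedComponent.mem_supp_iff] at ha ⊢
        rw [← ha]
        exact SimpleGraph.ConnectedComponent.sound hadj.reachable.symm
      · have hadj : (G.induce (Sᶜ : Set V)).Adj b ⟨z, hzc⟩ := h
        rw [SimpleGraph.ConnectedComponent.mem_supp_iff] at hb ⊢
        rw [← hb]
        exact SimpleGraph.ConnectedComponent.sound hadj.reachable.symm
  exact ⟨main x hkey.1, main y hkey.2⟩
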